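/- Identify ℝⁿ with ℝ^{m₁} × ⋯ × ℝ^{m_d} (d ≥ 2, m₁ + ⋯ + m_d = n) and write x = (x₁,…,x_d); let ∇_l f(x) ∈ ℝ^{m_l} denote the block gradients. Let f : ℝⁿ → ℝ be C² and strictly convex with unique minimum point x*. Let x ∈ ℝⁿ with t = f(x), suppose all eigenvalues of H(f)(y) lie in [α, β] (0 < α ≤ β) for all y ∈ V(t) = {y : f(y) ≤ t}, set κ = β/α, and suppose ∇_p f(x) = 0 for some block p ∈ [d]. If j ∈ [d] satisfies ‖∇_j f(x)‖ = max_{l ∈ [d]} ‖∇_l f(x)‖ and x' is obtained from x by replacing the j-th block with the minimizer of x_j ↦ f(x^j, x_j), then f(x') − f(x*) ≤ (f(x) − f(x*))·(1 − 1/((d−1)κ)). -/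

import Mathlib

open Set Topology Filter

section Helpers

/-- MVT quadratic upper bound. -/
lemma mvt_quad_upper {φ φ' φ'' : ℝ → ℝ} {B s : ℝ} (hs : 0 ≤ s)
    (hder : ∀ u, HasDerivAt φ (φ' u) u)
    (hder2 : ∀ u, HasDerivAt φ' (φ'' u) u)
    (hB : ∀ u ∈ Set.Icc 0 s, φ'' u ≤ B) :
    φ s ≤ φ 0 + φ' 0 * s + B * s ^ 2 / 2 := by
  rcases eq_or_lt_of_le hs with h0 | h0
  · subst h0; simp
  set ψ : ℝ → ℝ := fun u => φ 0 + φ' 0 * u + B * u ^ 2 / 2 - φ u with hψ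
  have hψder : ∀ u, HasDerivAt ψ (φ' 0 + B * u - φ' u) u := by
    intro u
    have h1 : HasDerivAt (fun u : ℝ => φ 0 + φ' 0 * u + B * u ^ 2 / 2)
        (φ' 0 + B * u) u := by
      have := (((hasDerivAt_id u).const_mul (φ' 0)).const_add (φ 0)).add
        (((hasDerivAt_pow 2 u).const_mul B).div_const 2)
      refine this.congr_deriv ?_
      rw [show (2:ℕ) - 1 = 1 from rfl]; push_cast; ring
    exact h1.sub (hder u)
  have hkey : ∀ c ∈ Ioo (0:ℝ) s, 0 ≤ φ' 0 + B * c - φ' c := by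
    intro c hc
    obtain ⟨v, hv, hveq⟩ := exists_hasDerivAt_eq_slope φ' φ'' hc.1
      (fun u _ => (hder2 u).continuousAt.continuousWithinAt) (fun u _ => hder2 u)
    have hvB : φ'' v ≤ B := hB v ⟨hv.1.le, hv.2.le.trans hc.2.le⟩
    have : (φ' c - φ' 0) / (c - 0) ≤ B := hveq ▸ hvB
    rw [sub_zero, div_le_iff₀ hc.1] at this
    linarith
  obtain ⟨c, hc, hceq⟩ := exists_hasDerivAt_eq_slope ψ _ h0
    (fun u _ => (hψder u).continuousAt.continuousWithinAt) (fun u _ => hψder u)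
  have h1 : 0 ≤ (ψ s - ψ 0) / (s - 0) := hceq ▸ hkey c hc
  have h2 : ψ 0 = 0 := by simp [hψ]
  rw [sub_zero, h2, sub_zero, le_div_iff₀ h0] at h1
  have : 0 ≤ ψ s := by linarith
  simp only [hψ] at this
  linarith

lemma mvt_quad_lower {φ φ' φ'' : ℝ → ℝ} {A s : ℝ} (hs : 0 ≤ s)
    (hder : ∀ u, HasDerivAt φ (φ' u) u)
    (hder2 : ∀ u, HasDerivAt φ' (φ'' u) u)
    (hA : ∀ u ∈ Set.Icc 0 s, A ≤ φ'' u) :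
    φ 0 + φ' 0 * s + A * s ^ 2 / 2 ≤ φ s := by
  have := mvt_quad_upper (φ := fun u => -φ u) (φ' := fun u => -φ' u)
    (φ'' := fun u => -φ'' u) (B := -A) hs (fun u => (hder u).neg)
    (fun u => (hder2 u).neg) (fun u hu => neg_le_neg (hA u hu))
  simp only [neg_mul, neg_neg] at this ⊢
  linarith

variable {E : Type*} [NormedAddCommGroup E] [InnerProductSpace ℝ E] [CompleteSpace E]

lemma line_hasDerivAt (f : E → ℝ) (hf : ContDiff ℝ 2 f) (c w : E) (s : ℝ) :
    HasDerivAt (fun u : ℝ => f (c + u • w)) (fderiv ℝ f (c + s • w) w) s := by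
  have hline : HasDerivAt (fun u : ℝ => c + u • w) w s := by
    simpa using ((hasDerivAt_id s).smul_const w).const_add c
  have hfd : HasFDerivAt f (fderiv ℝ f (c + s • w)) (c + s • w) :=
    (hf.differentiable (by norm_num) (c + s • w)).hasFDerivAt
  exact hfd.comp_hasDerivAt s hline

lemma line_hasDerivAt2 (f : E → ℝ) (hf : ContDiff ℝ 2 f) (c w : E) (s : ℝ) :
    HasDerivAt (fun u : ℝ => fderiv ℝ f (c + u • w) w)
      (iteratedFDeriv ℝ 2 f (c + s • w) ![w, w]) s := by
  have hg : Differentiable ℝ (fderiv ℝ f) :=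
    (hf.fderiv_right (m := 1) (by norm_num)).differentiable (by norm_num)
  have hline : HasDerivAt (fun u : ℝ => c + u • w) w s := by
    simpa using ((hasDerivAt_id s).smul_const w).const_add c
  have hfd : HasFDerivAt (fderiv ℝ f) (fderiv ℝ (fderiv ℝ f) (c + s • w)) (c + s • w) :=
    (hg (c + s • w)).hasFDerivAt
  have h1 : HasDerivAt (fun u : ℝ => fderiv ℝ f (c + u • w))
      (fderiv ℝ (fderiv ℝ f) (c + s • w) w) s := by
    exact hfd.comp_hasDerivAt s hline
  have h2 := h1.clm_apply (hasDerivAt_const s w)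
  simp only [map_zero, add_zero] at h2
  rw [iteratedFDeriv_two_apply]
  simpa using h2

lemma gradient_inner_eq (f : E → ℝ) {x : E} (v : E) :
    inner ℝ (gradient f x) v = fderiv ℝ f x v := by
  rw [gradient, InnerProductSpace.toDual_symm_apply]

lemma line_convexOn (f : E → ℝ) (hf : ContDiff ℝ 2 f)
    (hH : ∀ y v, 0 ≤ iteratedFDeriv ℝ 2 f y ![v, v]) (c w : E) :
    ConvexOn ℝ Set.univ (fun u : ℝ => f (c + u • w)) := by
  set φ := fun u : ℝ => f (c + u • w)
  have hd1 : ∀ s, HasDerivAt φ (fderiv ℝ f (c + s • w) w) s := line_hasDerivAt f hf c w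
  have hderiv : deriv φ = fun s => fderiv ℝ f (c + s • w) w := by
    funext s; exact (hd1 s).deriv
  apply convexOn_univ_of_deriv2_nonneg (fun s => (hd1 s).differentiableAt)
  · rw [hderiv]
    exact fun s => (line_hasDerivAt2 f hf c w s).differentiableAt
  · intro s
    have : deriv^[2] φ s = deriv (deriv φ) s := rfl
    rw [this, hderiv, (line_hasDerivAt2 f hf c w s).deriv]
    exact hH _ _

/-- points of a segment between two sublevel points stay in the sublevel set -/
lemma segment_sublevel (f : E → ℝ) (hf : ContDiff ℝ 2 f)
    (hH : ∀ y v, 0 ≤ iteratedFDeriv ℝ 2 f y ![v, v]) {a b : E} {t : ℝ}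
    (ha : f a ≤ t) (hb : f b ≤ t) {u : ℝ} (hu : u ∈ Icc (0:ℝ) 1) :
    f (a + u • (b - a)) ≤ t := by
  have hc := line_convexOn f hf hH a (b - a)
  have h := hc.2 (mem_univ (0:ℝ)) (mem_univ (1:ℝ)) (by linarith [hu.1, hu.2] : 0 ≤ 1 - u)
    hu.1 (by ring)
  simp only [smul_eq_mul, mul_zero, mul_one, zero_add, zero_smul, add_zero, one_smul] at h
  calc f (a + u • (b - a)) ≤ (1 - u) * f (a + (0:ℝ) • (b - a)) + u * f (a + (1:ℝ) • (b - a)) := by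
        simpa using h
    _ ≤ (1 - u) * t + u * t := by
        have h0 : f (a + (0:ℝ) • (b - a)) ≤ t := by simpa using ha
        have h1 : f (a + (1:ℝ) • (b - a)) ≤ t := by simpa using hb
        have := hu.1; have := hu.2
        nlinarith
    _ = t := by ring

/-- a convex function below t at 0 and s is below t in between -/
lemma convex_between {φ : ℝ → ℝ} (hc : ConvexOn ℝ Set.univ φ) {t s u : ℝ}
    (h0 : φ 0 ≤ t) (hs : φ s ≤ t) (hu : u ∈ Icc 0 s) : φ u ≤ t := by
  rcases eq_or_lt_of_le hu.1 with h | h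
  · exact h ▸ h0
  rcases eq_or_lt_of_le hu.2 with h' | h'
  · exact h' ▸ hs
  have hspos : 0 < s := lt_trans h h'
  have key := hc.2 (mem_univ (0:ℝ)) (mem_univ s)
    (by apply div_nonneg <;> linarith : (0:ℝ) ≤ (s - u)/s)
    (by apply div_nonneg <;> linarith : (0:ℝ) ≤ u/s)
    (by field_simp; ring)
  simp only [smul_eq_mul, mul_zero, zero_add] at key
  have : u / s * s = u := by field_simp
  rw [this] at key
  have h1 : (s-u)/s + u/s = 1 := by field_simp; ring
  have ha : (0:ℝ) ≤ (s - u)/s := by apply div_nonneg <;> linarith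
  have hb : (0:ℝ) ≤ u/s := by apply div_nonneg <;> linarith
  have h2 : (s-u)/s * t + u/s * t = t := by field_simp; ring
  nlinarith [mul_le_mul_of_nonneg_left h0 ha, mul_le_mul_of_nonneg_left hs hb]

end Helpers

section Block

variable {d : ℕ} {m : Fin d → ℕ}

lemma block_update (x : PiLp 2 (fun i : Fin d => EuclideanSpace ℝ (Fin (m i))))
    (j : Fin d) (v : EuclideanSpace ℝ (Fin (m j))) (s : ℝ) :
    x + s • ((WithLp.equiv 2 _).symm (Pi.single j v) :
        PiLp 2 (fun i : Fin d => EuclideanSpace ℝ (Fin (m i)))) =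
      WithLp.toLp 2 (Function.update x j (x j + s • v)) := by
  ext l
  simp only [PiLp.add_apply, PiLp.smul_apply, WithLp.equiv_symm_apply, PiLp.toLp_apply]
  rcases eq_or_ne l j with rfl | h
  · simp
  · simp [Function.update_of_ne h, Pi.single_eq_of_ne h]

lemma block_inner (x : PiLp 2 (fun i : Fin d => EuclideanSpace ℝ (Fin (m i))))
    (j : Fin d) (v : EuclideanSpace ℝ (Fin (m j))) :
    inner ℝ x ((WithLp.equiv 2 _).symm (Pi.single j v) :
        PiLp 2 (fun i : Fin d => EuclideanSpace ℝ (Fin (m i)))) = (inner ℝ (x j) v : ℝ) := by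
  rw [PiLp.inner_apply]
  rw [Fintype.sum_eq_single j]
  · simp
  · intro l hl
    simp [Pi.single_eq_of_ne hl]

lemma block_norm (j : Fin d) (v : EuclideanSpace ℝ (Fin (m j))) :
    ‖((WithLp.equiv 2 _).symm (Pi.single j v) :
        PiLp 2 (fun i : Fin d => EuclideanSpace ℝ (Fin (m i))))‖ = ‖v‖ := by
  have h := PiLp.norm_sq_eq_of_L2 _ ((WithLp.equiv 2 _).symm (Pi.single j v) :
    PiLp 2 (fun i : Fin d => EuclideanSpace ℝ (Fin (m i))))
  rw [Fintype.sum_eq_single j (by intro l hl; simp [Pi.single_eq_of_ne hl])] at h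
  simp only [WithLp.equiv_symm_apply, PiLp.toLp_apply, Pi.single_eq_same] at h
  have h1 := norm_nonneg ((WithLp.equiv 2 _).symm (Pi.single j v) :
    PiLp 2 (fun i : Fin d => EuclideanSpace ℝ (Fin (m i))))
  simp only [WithLp.equiv_symm_apply] at h1 ⊢
  nlinarith [norm_nonneg v]

end Block

set_option maxHeartbeats 1000000 in
theorem partial_min_step_vanishing_block {d : ℕ} (hd : 2 ≤ d) {m : Fin d → ℕ}
    (hm : ∀ i, 1 ≤ m i)
    (f : PiLp 2 (fun i : Fin d => EuclideanSpace ℝ (Fin (m i))) → ℝ)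
    (hf : ContDiff ℝ 2 f)
    (hHess : ∀ x v : PiLp 2 (fun i : Fin d => EuclideanSpace ℝ (Fin (m i))), v ≠ 0 →
      0 < iteratedFDeriv ℝ 2 f x ![v, v])
    (xstar : PiLp 2 (fun i : Fin d => EuclideanSpace ℝ (Fin (m i))))
    (hmin : ∀ y, f xstar ≤ f y)
    (huniq : ∀ y, (∀ z, f y ≤ f z) → y = xstar)
    (x : PiLp 2 (fun i : Fin d => EuclideanSpace ℝ (Fin (m i))))
    (α β : ℝ) (hα : 0 < α) (hαβ : α ≤ β)
    (hEig : ∀ y, f y ≤ f x → ∀ v : PiLp 2 (fun i : Fin d => EuclideanSpace ℝ (Fin (m i))),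
      α * ‖v‖ ^ 2 ≤ iteratedFDeriv ℝ 2 f y ![v, v] ∧
      iteratedFDeriv ℝ 2 f y ![v, v] ≤ β * ‖v‖ ^ 2)
    (p : Fin d) (hp : gradient f x p = 0)
    (j : Fin d)
    (hj : ∀ l : Fin d, ‖gradient f x l‖ ≤ ‖gradient f x j‖)
    (y : EuclideanSpace ℝ (Fin (m j)))
    (hy : ∀ z : EuclideanSpace ℝ (Fin (m j)),
      f (WithLp.toLp 2 (Function.update x j y)) ≤ f (WithLp.toLp 2 (Function.update x j z))) :
    f (WithLp.toLp 2 (Function.update x j y)) - f xstar ≤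
      (f x - f xstar) * (1 - 1 / ((d - 1) * (β / α))) := by
  classical
  have hβ : 0 < β := lt_of_lt_of_le hα hαβ
  set G := gradient f x with hGdef
  set N := ‖G j‖ with hNdef
  have hHess' : ∀ y v, 0 ≤ iteratedFDeriv ℝ 2 f y ![v, v] := by
    intro z v
    rcases eq_or_ne v 0 with rfl | h
    · have : (![(0 : PiLp 2 (fun i : Fin d => EuclideanSpace ℝ (Fin (m i)))), 0] : Fin 2 → _) 0
        = 0 := rfl
      exact le_of_eq ((iteratedFDeriv ℝ 2 f z).map_coord_zero 0 this).symm
    · exact (hHess z v h).le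
  -- gradient inner product formula
  have hginner : ∀ v, (inner ℝ G v : ℝ) = fderiv ℝ f x v := fun v => gradient_inner_eq f v
  -- Step A : ‖G‖² ≤ (d-1) N²
  have hA : ‖G‖ ^ 2 ≤ ((d : ℝ) - 1) * N ^ 2 := by
    rw [PiLp.norm_sq_eq_of_L2]
    have hsum : ∑ l, ‖G l‖ ^ 2 = ∑ l ∈ Finset.univ.erase p, ‖G l‖ ^ 2 := by
      rw [← Finset.sum_erase_add _ _ (Finset.mem_univ p), hp]
      simp
    rw [hsum]
    calc ∑ l ∈ Finset.univ.erase p, ‖G l‖ ^ 2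
        ≤ ∑ _l ∈ Finset.univ.erase p, N ^ 2 :=
          Finset.sum_le_sum fun l _ => pow_le_pow_left₀ (norm_nonneg _) (hj l) 2
      _ = ((Finset.univ.erase p).card : ℝ) * N ^ 2 := by
          rw [Finset.sum_const, nsmul_eq_mul]
      _ = ((d : ℝ) - 1) * N ^ 2 := by
          rw [Finset.card_erase_of_mem (Finset.mem_univ p)]
          simp only [Finset.card_univ, Fintype.card_fin]
          rw [Nat.cast_sub (by omega)]
          norm_num
  -- Step B : PL inequality 2α(f x - f xstar) ≤ ‖G‖²
  have hB : 2 * α * (f x - f xstar) ≤ ‖G‖ ^ 2 := by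
    set w := xstar - x with hw
    have hVseg : ∀ u ∈ Icc (0:ℝ) 1, f (x + u • w) ≤ f x := fun u hu =>
      segment_sublevel f hf hHess' le_rfl (hmin x) hu
    have hlow := mvt_quad_lower (A := α * ‖w‖ ^ 2) (s := 1) zero_le_one
      (line_hasDerivAt f hf x w) (line_hasDerivAt2 f hf x w)
      (fun u hu => (hEig _ (hVseg u hu) w).1)
    have h0 : x + (0:ℝ) • w = x := by simp
    have h1 : x + (1:ℝ) • w = xstar := by simp [hw]
    rw [h0, h1] at hlow
    have hcs : -(‖G‖ * ‖w‖) ≤ fderiv ℝ f x w := by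
      rw [← hginner w]
      have h1 := abs_real_inner_le_norm G w
      have h2 := neg_abs_le (inner ℝ G w : ℝ)
      linarith
    have h3 : f x - f xstar ≤ ‖G‖ * ‖w‖ - α * ‖w‖ ^ 2 / 2 := by linarith
    nlinarith [sq_nonneg (‖G‖ - α * ‖w‖),
      mul_le_mul_of_nonneg_left h3 (by positivity : (0:ℝ) ≤ 2 * α)]
  -- Step C : descent N² ≤ 2β (f x - f x')
  have hfx'le : f (WithLp.toLp 2 (Function.update x j y)) ≤ f x := by
    have := hy (x j)
    rwa [Function.update_eq_self, WithLp.toLp_ofLp] at this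
  have hC : N ^ 2 ≤ 2 * β * (f x - f (WithLp.toLp 2 (Function.update x j y))) := by
    rcases eq_or_ne (G j) 0 with hGj | hGj
    · rw [hNdef, hGj]
      simp only [norm_zero]
      nlinarith
    -- direction v = single j (-(G j))
    set v : PiLp 2 (fun i : Fin d => EuclideanSpace ℝ (Fin (m i))) :=
      (WithLp.equiv 2 _).symm (Pi.single j (-(G j))) with hvdef
    have hvnorm : ‖v‖ = N := by rw [hvdef, block_norm, norm_neg]
    have hxupd : ∀ s : ℝ, x + s • v = WithLp.toLp 2 (Function.update x j (x j + s • (-(G j)))) :=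
      fun s => block_update x j (-(G j)) s
    set φ : ℝ → ℝ := fun u => f (x + u • v) with hφdef
    have hφx' : ∀ s, f (WithLp.toLp 2 (Function.update x j y)) ≤ φ s := by
      intro s
      rw [hφdef]
      simp only
      rw [hxupd s]
      exact hy _
    have hφ0 : φ 0 = f x := by simp [hφdef]
    have hd1 : ∀ s, HasDerivAt φ (fderiv ℝ f (x + s • v) v) s := line_hasDerivAt f hf x v
    have hφ'0 : fderiv ℝ f x v = -N ^ 2 := by
      rw [← hginner v, hvdef, block_inner, inner_neg_right, real_inner_self_eq_norm_sq]
    have hconv : ConvexOn ℝ Set.univ φ := line_convexOn f hf hHess' x v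
    have hNpos : 0 < N := by rw [hNdef]; exact norm_pos_iff.mpr hGj
    -- the quadratic upper bound, valid whenever [0,s] stays in the sublevel set
    have hquad : ∀ s, 0 ≤ s → (∀ u ∈ Icc (0:ℝ) s, φ u ≤ f x) →
        φ s ≤ f x + (-N ^ 2) * s + β * N ^ 2 * s ^ 2 / 2 := by
      intro s hs hV
      have := mvt_quad_upper (B := β * ‖v‖ ^ 2) hs (hd1) (line_hasDerivAt2 f hf x v)
        (fun u hu => (hEig _ (hV u hu) v).2)
      have hx0 : x + (0:ℝ) • v = x := by simp
      rw [hx0, hφ'0, hvnorm] at this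
      simp only [hφdef]
      simp only [hφdef, hx0] at this
      linarith
    -- the sublevel time set
    set T : Set ℝ := Icc (0:ℝ) (1/β) ∩ {s | φ s ≤ f x} with hTdef
    have hφcont : Continuous φ := by
      rw [hφdef]
      exact hf.continuous.comp (continuous_const.add (continuous_id.smul continuous_const))
    have hT0 : (0:ℝ) ∈ T := ⟨⟨le_rfl, by positivity⟩, by simp [hφ0]⟩
    have hTclosed : IsClosed T := isClosed_Icc.inter (isClosed_le hφcont continuous_const)
    have hTcpt : IsCompact T := isCompact_Icc.of_isClosed_subset hTclosed inter_subset_left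
    set s₀ := sSup T with hs₀def
    have hs₀T : s₀ ∈ T := hTcpt.sSup_mem ⟨0, hT0⟩
    have hVseg : ∀ u ∈ Icc (0:ℝ) s₀, φ u ≤ f x := fun u hu =>
      convex_between hconv (le_of_eq hφ0) hs₀T.2 hu
    have hs₀eq : s₀ = 1/β := by
      by_contra hne
      have hs₀lt : s₀ < 1/β := lt_of_le_of_ne hs₀T.1.2 hne
      have hbdd : BddAbove T := hTcpt.bddAbove
      rcases eq_or_lt_of_le hs₀T.1.1 with h0 | h0
      · -- s₀ = 0 : use negative derivative at 0
        have hder0 : HasDerivAt φ (-N ^ 2) 0 := by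
          have := hd1 0
          simp only [zero_smul, add_zero] at this
          rwa [hφ'0] at this
        have hslope := hasDerivAt_iff_tendsto_slope.mp hder0
        have hneg : ∀ᶠ u in 𝓝[≠] (0:ℝ), slope φ 0 u < 0 :=
          hslope.eventually_lt_const (by nlinarith)
        have hneg' : ∀ᶠ u in 𝓝[>] (0:ℝ), slope φ 0 u < 0 :=
          hneg.filter_mono (nhdsWithin_mono 0 (fun u hu => ne_of_gt hu))
        have hIoo : Ioo (0:ℝ) (1/β) ∈ 𝓝[>] (0:ℝ) :=
          Ioo_mem_nhdsGT_of_mem ⟨le_rfl, by positivity⟩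
        obtain ⟨u, hu1, hu2⟩ := (hneg'.and (eventually_of_mem hIoo fun u hu => hu)).exists
        have hupos : 0 < u := hu2.1
        have hφu : φ u < f x := by
          have : slope φ 0 u = (φ u - f x) / u := by
            rw [slope_def_field, hφ0, sub_zero]
          rw [this] at hu1
          have := (div_neg_iff.mp hu1)
          rcases this with ⟨h1, h2⟩ | ⟨h1, h2⟩
          · linarith
          · linarith
        have huT : u ∈ T := ⟨⟨hupos.le, hu2.2.le⟩, hφu.le⟩
        have := le_csSup hbdd huT
        rw [← hs₀def] at this
        linarith [h0, hupos, this]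
      · -- s₀ > 0 : strict decrease at s₀, contradict sup
        have hq := hquad s₀ hs₀T.1.1 hVseg
        have hβs : β * s₀ < 1 := by
          have := (lt_div_iff₀ hβ).mp hs₀lt
          linarith
        have hstrict : φ s₀ < f x := by
          nlinarith [mul_pos (sub_pos.mpr hβs) (mul_pos h0 (mul_pos hNpos hNpos)),
            mul_pos h0 (mul_pos hNpos hNpos)]
        have hev : ∀ᶠ u in 𝓝 s₀, φ u < f x :=
          (hφcont.continuousAt).eventually_lt continuousAt_const hstrict
        have hIoo : Ioo s₀ (1/β) ∈ 𝓝[>] s₀ := Ioo_mem_nhdsGT_of_mem ⟨le_rfl, hs₀lt⟩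
        obtain ⟨u, hu1, hu2⟩ :=
          ((hev.filter_mono nhdsWithin_le_nhds).and
            (eventually_of_mem hIoo fun u hu => hu)).exists
        have huT : u ∈ T := ⟨⟨(hs₀T.1.1.trans hu2.1.le), hu2.2.le⟩, hu1.le⟩
        have := le_csSup hbdd huT
        rw [← hs₀def] at this
        linarith [hu2.1]
    -- conclude
    have hfinal := hquad (1/β) (by positivity) (by rw [← hs₀eq]; exact hVseg)
    have hx' := hφx' (1/β)
    have hβne : β ≠ 0 := ne_of_gt hβ
    have : f (WithLp.toLp 2 (Function.update x j y)) ≤ f x - N ^ 2 / (2 * β) := by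
      have expand : f x + (-N ^ 2) * (1/β) + β * N ^ 2 * (1/β) ^ 2 / 2
          = f x - N ^ 2 / (2 * β) := by field_simp; ring
      rw [expand] at hfinal
      linarith
    have h4 : N ^ 2 / (2*β) ≤ f x - f (WithLp.toLp 2 (Function.update x j y)) := by linarith
    calc N ^ 2 = (N ^ 2 / (2*β)) * (2*β) := by field_simp
      _ ≤ (f x - f (WithLp.toLp 2 (Function.update x j y))) * (2*β) :=
          mul_le_mul_of_nonneg_right h4 (by positivity)
      _ = 2*β*(f x - f (WithLp.toLp 2 (Function.update x j y))) := by ring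
  -- Step D : combine
  have hgap0 : 0 ≤ f x - f xstar := by linarith [hmin x]
  have hD1 : (1:ℝ) ≤ (d:ℝ) - 1 := by
    have : (2:ℝ) ≤ (d:ℝ) := by exact_mod_cast hd
    linarith
  have hx'star : f xstar ≤ f (WithLp.toLp 2 (Function.update x j y)) := hmin _
  set D := (d:ℝ) - 1 with hDdef
  have hDpos : 0 < D := by linarith
  have hfrac : (f x - f xstar) * (1 - 1 / (D * (β / α)))
      = (f x - f xstar) - (f x - f xstar) * α / (D * β) := by
    field_simp
  rw [hfrac]
  have hkey : (f x - f xstar) * α / (D * β) ≤ f x - f (WithLp.toLp 2 (Function.update x j y)) := by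
    rw [div_le_iff₀ (by positivity)]
    nlinarith [mul_le_mul_of_nonneg_left hC hDpos.le, hA, hB]
  linarith
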